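/- Let M and N be chain complexes of R-modules. Then N lies in the subprojectivity domain of M if and only if every chain map M → N factors through a contractible complex ⊕_{n∈Z} \overline{X_n}[n] such that X_n lies in the subprojectivity domain of M_n for every integer n. -/

import Mathlib

open CategoryTheory CategoryTheory.Limits

universe u

/-- `N` belongs to the subprojectivity domain of `M`: every morphism `M ⟶ N` factors
through a projective object. -/
def SubprojDomain {A : Type*} [Category A] (M N : A) : Prop :=
  ∀ f : M ⟶ N, ∃ (P : A) (_ : Projective P) (a : M ⟶ P) (b : P ⟶ N), a ≫ b = f

/-- The disc complex `\overline{N}[n]`: the module `N` placed in degrees `n+1` and `n`,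
connected by the identity, and `0` elsewhere. -/
def disc {R : Type u} [Ring R] (N : ModuleCat.{u} R) (n : ℤ) :
    ChainComplex (ModuleCat.{u} R) ℤ where
  X i := if i = n + 1 ∨ i = n then N else ModuleCat.of R PUnit
  d i j :=
    if h : i = n + 1 ∧ j = n then
      eqToHom (if_pos (Or.inl h.1)) ≫ eqToHom (if_pos (Or.inr h.2)).symm
    else 0
  shape i j h := by
    try dsimp only
    rw [dif_neg]
    rintro ⟨rfl, rfl⟩
    exact h rfl
  d_comp_d' i j k hij hjk := by
    simp only [ComplexShape.down_Rel] at hij hjk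
    try dsimp only
    by_cases hc : j = n + 1 ∧ k = n
    · rw [dif_neg (by omega), zero_comp]
    · rw [dif_neg hc, comp_zero]

namespace SubprojAux

variable {R : Type u} [Ring R]

lemma discXTop {Y : ModuleCat.{u} R} {n i : ℤ} (h : i = n + 1) : (disc Y n).X i = Y :=
  if_pos (Or.inl h)

lemma discXBot {Y : ModuleCat.{u} R} {n i : ℤ} (h : i = n) : (disc Y n).X i = Y :=
  if_pos (Or.inr h)

lemma disc_subsingleton {Y : ModuleCat.{u} R} {n i : ℤ} (h1 : i ≠ n + 1) (h2 : i ≠ n) :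
    Subsingleton ((disc Y n).X i) := by
  have : (disc Y n).X i = ModuleCat.of R PUnit := if_neg (by tauto)
  rw [this]
  exact inferInstanceAs (Subsingleton PUnit)

lemma hom_of_subsingleton {A B : ModuleCat.{u} R} [Subsingleton A] (f : A ⟶ B) : f = 0 := by
  ext a
  rw [Subsingleton.elim a 0]
  simp

lemma disc_d_eq {Y : ModuleCat.{u} R} {n i j : ℤ} (hi : i = n + 1) (hj : j = n) :
    (disc Y n).d i j = eqToHom (discXTop hi) ≫ eqToHom (discXBot hj).symm :=
  dif_pos ⟨hi, hj⟩

lemma disc_d_zero {Y : ModuleCat.{u} R} {n i j : ℤ} (h : ¬(i = n + 1 ∧ j = n)) :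
    (disc Y n).d i j = 0 :=
  dif_neg h

end SubprojAux

namespace SubprojAux
variable {R : Type u} [Ring R]

def discMap {Y Z : ModuleCat.{u} R} (v : Y ⟶ Z) (n : ℤ) : disc Y n ⟶ disc Z n where
  f i :=
    if h : i = n + 1 ∨ i = n then
      eqToHom (show (disc Y n).X i = Y from if_pos h) ≫ v ≫ eqToHom (show (disc Z n).X i = Z from if_pos h).symm
    else 0
  comm' i j hij := by
    simp only [ComplexShape.down_Rel] at hij
    by_cases hc : i = n + 1 ∧ j = n
    · obtain ⟨hi, hj⟩ := hc
      rw [disc_d_eq hi hj, disc_d_eq hi hj, dif_pos (Or.inl hi), dif_pos (Or.inr hj)]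
      simp
    · rw [disc_d_zero hc, disc_d_zero hc, comp_zero, zero_comp]

def fromDisc {Y : ModuleCat.{u} R} {n : ℤ} (N : ChainComplex (ModuleCat.{u} R) ℤ)
    (h : Y ⟶ N.X (n + 1)) : disc Y n ⟶ N where
  f i :=
    if h1 : i = n + 1 then eqToHom (discXTop h1) ≫ h ≫ eqToHom (by rw [h1])
    else if h2 : i = n then eqToHom (discXBot h2) ≫ h ≫ N.d (n + 1) n ≫ eqToHom (by rw [h2])
    else 0
  comm' i j hij := by
    simp only [ComplexShape.down_Rel] at hij
    by_cases h1 : i = n + 1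
    · have h2 : j = n := by omega
      rw [disc_d_eq h1 h2, dif_pos h1, dif_neg (by omega : ¬ j = n + 1), dif_pos h2]
      subst h1; subst h2
      simp
    · rw [disc_d_zero (by tauto), zero_comp, dif_neg h1]
      by_cases h2 : i = n
      · rw [dif_pos h2]
        subst h2
        simp
      · rw [dif_neg h2, zero_comp]

def toDisc (M : ChainComplex (ModuleCat.{u} R) ℤ) {Y : ModuleCat.{u} R} {n : ℤ}
    (g : M.X n ⟶ Y) : M ⟶ disc Y n where
  f i :=
    if h1 : i = n + 1 then M.d i n ≫ g ≫ eqToHom (discXTop h1).symm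
    else if h2 : i = n then eqToHom (by rw [h2]) ≫ g ≫ eqToHom (discXBot h2).symm
    else 0
  comm' i j hij := by
    simp only [ComplexShape.down_Rel] at hij
    by_cases h1 : i = n + 1
    · have h2 : j = n := by omega
      rw [disc_d_eq h1 h2, dif_pos h1, dif_neg (by omega : ¬ j = n + 1), dif_pos h2]
      subst h2; subst h1
      simp
    · rw [disc_d_zero (by tauto), comp_zero]
      by_cases h2 : j = n + 1
      · rw [dif_pos h2]
        subst h2
        have : M.d i (n + 1) ≫ M.d (n + 1) n = 0 := M.d_comp_d _ _ _
        rw [← Category.assoc, ← Category.assoc, this]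
        simp
      · by_cases h3 : j = n
        · omega
        · rw [dif_neg h2, dif_neg h3, comp_zero]

end SubprojAux

namespace SubprojAux
variable {R : Type u} [Ring R]

lemma discMap_f {Y Z : ModuleCat.{u} R} (v : Y ⟶ Z) {n i : ℤ} (h : i = n + 1 ∨ i = n) :
    (discMap v n).f i = eqToHom (show (disc Y n).X i = Y from if_pos h) ≫ v ≫
      eqToHom (show (disc Z n).X i = Z from if_pos h).symm := dif_pos h

lemma discMap_f_zero {Y Z : ModuleCat.{u} R} (v : Y ⟶ Z) {n i : ℤ}
    (h : ¬(i = n + 1 ∨ i = n)) : (discMap v n).f i = 0 := dif_neg h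

lemma fromDisc_f_top {Y : ModuleCat.{u} R} {n : ℤ} (N : ChainComplex (ModuleCat.{u} R) ℤ)
    (h : Y ⟶ N.X (n + 1)) {i : ℤ} (h1 : i = n + 1) :
    (fromDisc N h).f i = eqToHom (discXTop h1) ≫ h ≫
      eqToHom (show N.X (n + 1) = N.X i by rw [h1]) := dif_pos h1

lemma fromDisc_f_bot {Y : ModuleCat.{u} R} {n : ℤ} (N : ChainComplex (ModuleCat.{u} R) ℤ)
    (h : Y ⟶ N.X (n + 1)) {i : ℤ} (h2 : i = n) :
    (fromDisc N h).f i = eqToHom (discXBot h2) ≫ h ≫ N.d (n + 1) n ≫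
      eqToHom (show N.X n = N.X i by rw [h2]) := by
  show (if h1 : i = n + 1 then _ else if h2 : i = n then _ else 0) = _
  rw [dif_neg (by omega : ¬ i = n + 1), dif_pos h2]

lemma fromDisc_f_zero {Y : ModuleCat.{u} R} {n : ℤ} (N : ChainComplex (ModuleCat.{u} R) ℤ)
    (h : Y ⟶ N.X (n + 1)) {i : ℤ} (h1 : ¬ i = n + 1) (h2 : ¬ i = n) :
    (fromDisc N h).f i = 0 := by
  show (if h1 : i = n + 1 then _ else if h2 : i = n then _ else 0) = 0
  rw [dif_neg h1, dif_neg h2]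

lemma toDisc_f_bot (M : ChainComplex (ModuleCat.{u} R) ℤ) {Y : ModuleCat.{u} R} {n : ℤ}
    (g : M.X n ⟶ Y) {i : ℤ} (h2 : i = n) :
    (toDisc M g).f i = eqToHom (show M.X i = M.X n by rw [h2]) ≫ g ≫
      eqToHom (discXBot h2).symm := by
  show (if h1 : i = n + 1 then _ else if h2 : i = n then _ else 0) = _
  rw [dif_neg (by omega : ¬ i = n + 1), dif_pos h2]

lemma epi_of_epi_f {K L : ChainComplex (ModuleCat.{u} R) ℤ} (g : K ⟶ L)
    (h : ∀ k, Epi (g.f k)) : Epi g := by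
  constructor
  intro W u v huv
  apply HomologicalComplex.hom_ext
  intro k
  haveI := h k
  have hk : g.f k ≫ u.f k = g.f k ≫ v.f k := by
    have := congrArg (fun t => HomologicalComplex.Hom.f t k) huv
    simpa using this
  exact (cancel_epi (g.f k)).1 hk

lemma epi_discMap {Y Z : ModuleCat.{u} R} (v : Y ⟶ Z) (hv : Epi v) (n : ℤ) :
    Epi (discMap v n) := by
  apply epi_of_epi_f
  intro k
  by_cases h : k = n + 1 ∨ k = n
  · rw [discMap_f v h]
    haveI := hv
    infer_instance
  · rw [ModuleCat.epi_iff_surjective]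
    intro z
    haveI : Subsingleton ((disc Z n).X k) := disc_subsingleton (by tauto) (by tauto)
    exact ⟨0, Subsingleton.elim _ _⟩

lemma projective_disc (Y : ModuleCat.{u} R) (hY : Projective Y) (n : ℤ) :
    Projective (disc Y n) := by
  constructor
  intro E Z φ e he
  haveI : Epi (e.f (n + 1)) := inferInstance
  obtain ⟨ψ, hψ⟩ := hY.factors (eqToHom (discXTop (rfl : (n+1 : ℤ) = n+1)).symm ≫ φ.f (n + 1))
    (e.f (n + 1))
  refine ⟨fromDisc E ψ, ?_⟩
  apply HomologicalComplex.hom_ext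
  intro i
  show (fromDisc E ψ).f i ≫ e.f i = φ.f i
  by_cases h1 : i = n + 1
  · rw [fromDisc_f_top E ψ h1]
    subst h1
    simp only [eqToHom_refl, Category.comp_id, Category.assoc, hψ]
    simp
  · by_cases h2 : i = n
    · rw [fromDisc_f_bot E ψ h2]
      subst h2
      have hcomm : E.d (i+1) i ≫ e.f i = e.f (i+1) ≫ Z.d (i+1) i := (e.comm (i+1) i).symm
      have hφ : φ.f (i+1) ≫ Z.d (i+1) i = (disc Y i).d (i+1) i ≫ φ.f i := φ.comm (i+1) i
      rw [disc_d_eq rfl rfl] at hφ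
      simp only [eqToHom_refl, Category.comp_id, Category.assoc, hcomm]
      rw [reassoc_of% hψ, hφ]
      simp
    · rw [fromDisc_f_zero E ψ h1 h2, zero_comp]
      haveI : Subsingleton ((disc Y n).X i) := disc_subsingleton h1 h2
      exact (hom_of_subsingleton _).symm

lemma projective_eval (P : ChainComplex (ModuleCat.{u} R) ℤ) (hP : Projective P) (m : ℤ) :
    Projective (P.X m) := by
  constructor
  intro E Z g e he
  haveI : Epi (discMap e m) := epi_discMap e he m
  obtain ⟨ψ, hψ⟩ := hP.factors (toDisc P g) (discMap e m)
  have hm : ψ.f m ≫ (discMap e m).f m = (toDisc P g).f m := by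
    have := congrArg (fun t => HomologicalComplex.Hom.f t m) hψ
    simpa using this
  rw [discMap_f e (Or.inr rfl), toDisc_f_bot P g rfl] at hm
  refine ⟨ψ.f m ≫ eqToHom (discXBot rfl), ?_⟩
  have := congrArg (fun t => t ≫ eqToHom (discXBot (rfl : (m : ℤ) = m))) hm
  simpa [Category.assoc] using this

lemma projective_coprod {ι : Type} (g : ι → ChainComplex (ModuleCat.{u} R) ℤ)
    (h : ∀ i, Projective (g i)) : Projective (∐ g) := by
  constructor
  intro E Z f e he
  refine ⟨Sigma.desc fun i => letI := h i; Projective.factorThru (Sigma.ι g i ≫ f) e, ?_⟩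
  apply colimit.hom_ext
  rintro ⟨i⟩
  haveI := h i
  simp [Projective.factorThru_comp]

end SubprojAux

namespace SubprojAux
variable {R : Type u} [Ring R]

noncomputable def proj (X : ℤ → ModuleCat.{u} R) (n : ℤ) :
    (∐ fun m : ℤ => disc (X m) m) ⟶ disc (X n) n :=
  Sigma.desc (fun m => if h : m = n then eqToHom (by rw [h]) else 0)

lemma ι_proj_self (X : ℤ → ModuleCat.{u} R) (n : ℤ) :
    Sigma.ι (fun m : ℤ => disc (X m) m) n ≫ proj X n = 𝟙 _ := by
  simp [proj]

lemma ι_proj_ne (X : ℤ → ModuleCat.{u} R) {m n : ℤ} (h : m ≠ n) :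
    Sigma.ι (fun m : ℤ => disc (X m) m) m ≫ proj X n = 0 := by
  simp [proj, h]

lemma coprod_hom_ext {X : ℤ → ModuleCat.{u} R} (k : ℤ) {W : ModuleCat.{u} R}
    {g h : (∐ fun m : ℤ => disc (X m) m).X k ⟶ W}
    (H : ∀ n, (Sigma.ι (fun m : ℤ => disc (X m) m) n).f k ≫ g =
      (Sigma.ι (fun m : ℤ => disc (X m) m) n).f k ≫ h) : g = h := by
  have hc := isColimitOfPreserves
    (HomologicalComplex.eval (ModuleCat.{u} R) (ComplexShape.down ℤ) k)
    (colimit.isColimit (Discrete.functor (fun m : ℤ => disc (X m) m)))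
  apply hc.hom_ext
  rintro ⟨n⟩
  exact H n

lemma ι_f_zero {X : ℤ → ModuleCat.{u} R} {n k : ℤ} (h1 : k ≠ n + 1) (h2 : k ≠ n) :
    (Sigma.ι (fun m : ℤ => disc (X m) m) n).f k = 0 := by
  haveI : Subsingleton ((disc (X n) n).X k) := disc_subsingleton h1 h2
  exact hom_of_subsingleton _

lemma ι_f_proj_f_self (X : ℤ → ModuleCat.{u} R) (n k : ℤ) :
    (Sigma.ι (fun m : ℤ => disc (X m) m) n).f k ≫ (proj X n).f k = 𝟙 _ := by
  rw [← HomologicalComplex.comp_f, ι_proj_self]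
  rfl

lemma ι_f_proj_f_ne (X : ℤ → ModuleCat.{u} R) {m n : ℤ} (h : m ≠ n) (k : ℤ) :
    (Sigma.ι (fun m : ℤ => disc (X m) m) m).f k ≫ (proj X n).f k = 0 := by
  rw [← HomologicalComplex.comp_f, ι_proj_ne X h]
  rfl

lemma coprod_id_decomp (X : ℤ → ModuleCat.{u} R) (k : ℤ) :
    𝟙 ((∐ fun m : ℤ => disc (X m) m).X k) =
      (proj X k).f k ≫ (Sigma.ι (fun m : ℤ => disc (X m) m) k).f k
      + (proj X (k - 1)).f k ≫ (Sigma.ι (fun m : ℤ => disc (X m) m) (k - 1)).f k := by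
  apply coprod_hom_ext k
  intro n
  rw [Category.comp_id, Preadditive.comp_add, ← Category.assoc, ← Category.assoc]
  by_cases h1 : n = k
  · subst h1
    rw [ι_f_proj_f_self, ι_f_proj_f_ne X (by omega : n ≠ n - 1)]
    simp
  · by_cases h2 : n = k - 1
    · subst h2
      rw [ι_f_proj_f_self, ι_f_proj_f_ne X h1]
      simp
    · rw [ι_f_proj_f_ne X h1, ι_f_proj_f_ne X h2, ι_f_zero (by omega) (by omega)]
      simp

end SubprojAux

namespace SubprojAux
variable {R : Type u} [Ring R]

noncomputable def intoC (M : ChainComplex (ModuleCat.{u} R) ℤ) (X : ℤ → ModuleCat.{u} R)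
    (β : ∀ n, M.X n ⟶ X n) : M ⟶ ∐ fun m : ℤ => disc (X m) m where
  f k := β k ≫ eqToHom (discXBot rfl).symm ≫ (Sigma.ι (fun m : ℤ => disc (X m) m) k).f k
    + M.d k (k - 1) ≫ β (k - 1) ≫ eqToHom (discXTop (by omega : k = (k - 1) + 1)).symm ≫
        (Sigma.ι (fun m : ℤ => disc (X m) m) (k - 1)).f k
  comm' i j hij := by
    simp only [ComplexShape.down_Rel] at hij
    obtain rfl : j = i - 1 := by omega
    rw [Preadditive.add_comp, Preadditive.comp_add]
    have c1 := (Sigma.ι (fun m : ℤ => disc (X m) m) i).comm i (i - 1)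
    have c2 := (Sigma.ι (fun m : ℤ => disc (X m) m) (i - 1)).comm i (i - 1)
    rw [disc_d_zero (by omega)] at c1
    rw [disc_d_eq (by omega : i = (i - 1) + 1) rfl] at c2
    calc (β i ≫ eqToHom (discXBot rfl).symm ≫ (Sigma.ι (fun m : ℤ => disc (X m) m) i).f i) ≫
          (∐ fun m : ℤ => disc (X m) m).d i (i - 1)
        + (M.d i (i - 1) ≫ β (i - 1) ≫ eqToHom (discXTop (by omega : i = (i - 1) + 1)).symm ≫
            (Sigma.ι (fun m : ℤ => disc (X m) m) (i - 1)).f i) ≫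
          (∐ fun m : ℤ => disc (X m) m).d i (i - 1)
        = β i ≫ eqToHom (discXBot rfl).symm ≫
            ((Sigma.ι (fun m : ℤ => disc (X m) m) i).f i ≫
              (∐ fun m : ℤ => disc (X m) m).d i (i - 1))
        + M.d i (i - 1) ≫ β (i - 1) ≫ eqToHom (discXTop (by omega : i = (i - 1) + 1)).symm ≫
            ((Sigma.ι (fun m : ℤ => disc (X m) m) (i - 1)).f i ≫
              (∐ fun m : ℤ => disc (X m) m).d i (i - 1)) := by
          simp only [Category.assoc]
      _ = M.d i (i - 1) ≫ β (i - 1) ≫ eqToHom (discXBot rfl).symm ≫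
            (Sigma.ι (fun m : ℤ => disc (X m) m) (i - 1)).f (i - 1) := by
          rw [c1, c2]
          simp
      _ = M.d i (i - 1) ≫ (β (i - 1) ≫ eqToHom (discXBot rfl).symm ≫
              (Sigma.ι (fun m : ℤ => disc (X m) m) (i - 1)).f (i - 1)
            + M.d (i - 1) (i - 1 - 1) ≫ β (i - 1 - 1) ≫
              eqToHom (discXTop (by omega : i - 1 = (i - 1 - 1) + 1)).symm ≫
              (Sigma.ι (fun m : ℤ => disc (X m) m) (i - 1 - 1)).f (i - 1)) := by
          rw [Preadditive.comp_add, M.d_comp_d_assoc]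
          simp

end SubprojAux

namespace SubprojAux
variable {R : Type u} [Ring R]

lemma intoC_f (M : ChainComplex (ModuleCat.{u} R) ℤ) (X : ℤ → ModuleCat.{u} R)
    (β : ∀ n, M.X n ⟶ X n) (k : ℤ) :
    (intoC M X β).f k =
      β k ≫ eqToHom (discXBot rfl).symm ≫ (Sigma.ι (fun m : ℤ => disc (X m) m) k).f k
      + M.d k (k - 1) ≫ β (k - 1) ≫ eqToHom (discXTop (by omega : k = (k - 1) + 1)).symm ≫
          (Sigma.ι (fun m : ℤ => disc (X m) m) (k - 1)).f k := rfl

lemma top_extract {M : ChainComplex (ModuleCat.{u} R) ℤ} {X : ℤ → ModuleCat.{u} R}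
    (a : M ⟶ ∐ fun m : ℤ => disc (X m) m) (k : ℤ) :
    a.f k ≫ (proj X (k - 1)).f k =
      M.d k (k - 1) ≫ a.f (k - 1) ≫ (proj X (k - 1)).f (k - 1) ≫ eqToHom (discXBot rfl) ≫
        eqToHom (discXTop (by omega : k = (k - 1) + 1)).symm := by
  have hcomm := (a ≫ proj X (k - 1)).comm k (k - 1)
  rw [disc_d_eq (by omega : k = (k - 1) + 1) rfl] at hcomm
  simp only [HomologicalComplex.comp_f, Category.assoc] at hcomm
  have := congrArg (fun t => t ≫ (eqToHom (discXBot (rfl : (k - 1 : ℤ) = k - 1)) ≫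
    eqToHom (discXTop (by omega : k = (k - 1) + 1)).symm)) hcomm
  simpa [Category.assoc] using this

lemma intoC_eta {M : ChainComplex (ModuleCat.{u} R) ℤ} {X : ℤ → ModuleCat.{u} R}
    (a : M ⟶ ∐ fun m : ℤ => disc (X m) m) :
    a = intoC M X (fun n => a.f n ≫ (proj X n).f n ≫ eqToHom (discXBot rfl)) := by
  apply HomologicalComplex.hom_ext
  intro k
  rw [intoC_f]
  conv_lhs => rw [← Category.comp_id (a.f k), coprod_id_decomp X k]
  rw [Preadditive.comp_add]
  congr 1
  · simp [Category.assoc]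
  · rw [← Category.assoc (a.f k), top_extract a k]
    simp [Category.assoc]

lemma intoC_comp_map {M : ChainComplex (ModuleCat.{u} R) ℤ} {Q X : ℤ → ModuleCat.{u} R}
    (u : ∀ n, M.X n ⟶ Q n) (v : ∀ n, Q n ⟶ X n) :
    intoC M Q u ≫ Limits.Sigma.map (fun n => discMap (v n) n) = intoC M X (fun n => u n ≫ v n) := by
  have key : ∀ n k, (Sigma.ι (fun m : ℤ => disc (Q m) m) n).f k ≫
      (Limits.Sigma.map (fun n => discMap (v n) n)).f k
      = (discMap (v n) n).f k ≫ (Sigma.ι (fun m : ℤ => disc (X m) m) n).f k := by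
    intro n k
    have hmap : Sigma.ι (fun m : ℤ => disc (Q m) m) n ≫ Limits.Sigma.map (fun n => discMap (v n) n)
        = discMap (v n) n ≫ Sigma.ι (fun m : ℤ => disc (X m) m) n := by
      simp [Limits.Sigma.map]
    rw [← HomologicalComplex.comp_f, ← HomologicalComplex.comp_f, hmap]
  apply HomologicalComplex.hom_ext
  intro k
  rw [HomologicalComplex.comp_f, intoC_f, intoC_f, Preadditive.add_comp]
  simp only [Category.assoc]
  rw [key k k, key (k - 1) k, discMap_f (v k) (Or.inr rfl),
    discMap_f (v (k - 1)) (Or.inl (by omega : k = (k - 1) + 1))]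
  congr 1
  · simp only [← Category.assoc]
    congr 1
    simp only [Category.assoc]
    rw [eqToHom_trans_assoc]
    simp
  · congr 1
    simp only [← Category.assoc]
    congr 1
    simp only [Category.assoc]
    rw [eqToHom_trans_assoc]
    simp

end SubprojAux


/-- `N` lies in the subprojectivity domain of `M` iff every chain map
`M ⟶ N` factors through a contractible complex `⊕_{n∈ℤ} \overline{X_n}[n]` with each `X_n`
in the subprojectivity domain of the module `M_n`. -/
theorem subprojDomain_iff_factors_through_contractible
    {R : Type u} [Ring R] (M N : ChainComplex (ModuleCat.{u} R) ℤ) :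
    SubprojDomain M N ↔
      ∀ f : M ⟶ N, ∃ (X : ℤ → ModuleCat.{u} R),
        (∀ n : ℤ, SubprojDomain (M.X n) (X n)) ∧
        ∃ (a : M ⟶ ∐ fun n : ℤ => disc (X n) n)
          (b : (∐ fun n : ℤ => disc (X n) n) ⟶ N), a ≫ b = f := by
  constructor
  · intro h f
    obtain ⟨P, hP, a, b, hab⟩ := h f
    haveI := hP
    refine ⟨fun n => P.X (n + 1), ?_, ?_⟩
    · intro n g
      exact ⟨P.X (n + 1), SubprojAux.projective_eval P hP (n + 1), g, 𝟙 _, Category.comp_id g⟩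
    · set ρ : (∐ fun n : ℤ => disc (P.X (n + 1)) n) ⟶ P :=
        Sigma.desc (fun n => SubprojAux.fromDisc P (𝟙 (P.X (n + 1)))) with hρ
      haveI hepi : Epi ρ := by
        apply SubprojAux.epi_of_epi_f
        intro k
        have hcomp : (Sigma.ι (fun n : ℤ => disc (P.X (n + 1)) n) (k - 1)).f k ≫ ρ.f k
            = (SubprojAux.fromDisc P (𝟙 (P.X (k - 1 + 1)))).f k := by
          rw [← HomologicalComplex.comp_f, hρ, colimit.ι_desc]
          rfl
        haveI : Epi ((SubprojAux.fromDisc P (𝟙 (P.X (k - 1 + 1)))).f k) := by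
          rw [SubprojAux.fromDisc_f_top P _ (by omega : k = (k - 1) + 1)]
          infer_instance
        rw [← hcomp] at this
        haveI := this
        exact epi_of_epi ((Sigma.ι (fun n : ℤ => disc (P.X (n + 1)) n) (k - 1)).f k) (ρ.f k)
      have hsec : Projective.factorThru (𝟙 P) ρ ≫ ρ = 𝟙 P := Projective.factorThru_comp _ _
      refine ⟨a ≫ Projective.factorThru (𝟙 P) ρ, ρ ≫ b, ?_⟩
      rw [Category.assoc, ← Category.assoc (Projective.factorThru (𝟙 P) ρ) ρ b, hsec,
        Category.id_comp, hab]
  · intro h f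
    obtain ⟨X, hX, a, b, hab⟩ := h f
    choose Q hQ u v huv using fun n =>
      hX n (a.f n ≫ (SubprojAux.proj X n).f n ≫ eqToHom (SubprojAux.discXBot rfl))
    refine ⟨∐ fun n : ℤ => disc (Q n) n,
      SubprojAux.projective_coprod _ (fun n => SubprojAux.projective_disc (Q n) (hQ n) n),
      SubprojAux.intoC M Q u, Limits.Sigma.map (fun n => SubprojAux.discMap (v n) n) ≫ b, ?_⟩
    rw [← Category.assoc, SubprojAux.intoC_comp_map]
    have hfun : (fun n => u n ≫ v n) =
        fun n => a.f n ≫ (SubprojAux.proj X n).f n ≫ eqToHom (SubprojAux.discXBot rfl) :=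
      funext huv
    rw [hfun, ← SubprojAux.intoC_eta a, hab]
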